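/- Let q(n,k) be the number of permutations of {1,...,n} with sort-number exactly k under SC_231. Then q(n+1, k) ≥ 2·q(n, k) for all n ≥ 1 and k ≥ 0. -/

import Mathlib

/-- One step-by-step implementation of the `SC_231` stack-sorting machine.
`sc231Aux input stack out`: the next input entry is pushed onto the stack unless
pushing it would create a consecutive occurrence of the pattern `231` read from
top to bottom among the stack entries (i.e. the incoming `x` on top of `y`, `z`
with `z < x < y`), in which case the top of the stack is popped and appended to
the output; once the input is exhausted the remaining stack entries are popped. -/
def sc231Aux : List ℕ → List ℕ → List ℕ → List ℕ
  | [], stack, out => out ++ stack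
  | x :: rest, y :: z :: s, out =>
      if z < x ∧ x < y then sc231Aux (x :: rest) (z :: s) (out ++ [y])
      else sc231Aux rest (x :: y :: z :: s) out
  | x :: rest, stack, out => sc231Aux rest (x :: stack) out
termination_by input stack _ => 2 * input.length + stack.length
decreasing_by all_goals (simp; try omega)

/-- The consecutive-pattern-avoiding stack sort map `SC_231`. -/
def SC231 (p : List ℕ) : List ℕ := sc231Aux p [] []

/-- The list of entries that are *pre-popped* while `SC_231` processes the
input, i.e. popped while input entries still remain. -/
def prePopsAux : List ℕ → List ℕ → List ℕ
  | [], _ => []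
  | x :: rest, y :: z :: s =>
      if z < x ∧ x < y then y :: prePopsAux (x :: rest) (z :: s)
      else prePopsAux rest (x :: y :: z :: s)
  | x :: rest, stack => prePopsAux rest (x :: stack)
termination_by input stack => 2 * input.length + stack.length
decreasing_by all_goals (simp; try omega)

def prePops (p : List ℕ) : List ℕ := prePopsAux p []

/-- `p` has a peak: an interior position whose entry exceeds both neighbours. -/
def HasPeak (p : List ℕ) : Prop :=
  ∃ i, i + 2 < p.length ∧ p[i]! < p[i+1]! ∧ p[i+2]! < p[i+1]!

/-- `p` is a permutation of `{1, …, n}` (written as a list of its entries). -/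
def IsPermOf (n : ℕ) (p : List ℕ) : Prop := p.Perm (List.range' 1 n)

/-- `p` contains the (classical) pattern `q`. -/
def ContainsPat (p q : List ℕ) : Prop :=
  ∃ s : List ℕ, s.Sublist p ∧ s.length = q.length ∧
    ∀ i j, i < s.length → j < s.length → (s[i]! < s[j]! ↔ q[i]! < q[j]!)

def AvoidsPat (p q : List ℕ) : Prop := ¬ ContainsPat p q

/-- The sort-number of `p`: the least `k` with `SC_231^k(p)` peakless. -/
noncomputable def sortNum (p : List ℕ) : ℕ := sInf {k | ¬ HasPeak (SC231^[k] p)}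


def pairL (b : Bool) : List ℕ := if b then [1,2] else [2,1]

@[simp] lemma pairL_true : pairL true = [1,2] := rfl
@[simp] lemma pairL_false : pairL false = [2,1] := rfl

def Tb (b : Bool) (l : List ℕ) : List ℕ := l.flatMap fun v => if v = 1 then pairL b else [v+1]

@[simp] lemma Tb_nil (b) : Tb b [] = [] := rfl
@[simp] lemma Tb_cons (b v l) : Tb b (v::l) = (if v = 1 then pairL b else [v+1]) ++ Tb b l := rfl
@[simp] lemma Tb_append (b l₁ l₂) : Tb b (l₁ ++ l₂) = Tb b l₁ ++ Tb b l₂ := by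
  simp [Tb]

lemma Tb_eq_map {l : List ℕ} (h : 1 ∉ l) (b) : Tb b l = l.map (·+1) := by
  induction l with
  | nil => rfl
  | cons a l ih =>
    simp only [List.mem_cons, not_or] at h
    simp [Tb_cons, Ne.symm, h.1, ih h.2]

lemma not_hasPeak_short {l : List ℕ} (h : l.length ≤ 2) : ¬ HasPeak l := by
  rintro ⟨i, hi, _⟩; omega

lemma hasPeak_cons₃ (a b c : ℕ) (l : List ℕ) :
    HasPeak (a::b::c::l) ↔ (a < b ∧ c < b) ∨ HasPeak (b::c::l) := by
  constructor
  · rintro ⟨i, hi, h1, h2⟩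
    cases i with
    | zero =>
      simp only [List.getElem!_cons_zero] at h1
      left
      refine ⟨by simpa using h1, by simpa using h2⟩
    | succ j =>
      right
      exact ⟨j, by simpa using hi, by simpa using h1, by simpa using h2⟩
  · rintro (⟨h1, h2⟩ | ⟨j, hj, h1, h2⟩)
    · exact ⟨0, by simp, by simpa using h1, by simpa using h2⟩
    · exact ⟨j+1, by simpa using hj, by simpa using h1, by simpa using h2⟩

lemma succ_peak (l : List ℕ) : HasPeak (l.map (·+1)) ↔ HasPeak l := by
  induction l with
  | nil => simp [HasPeak]
  | cons a l ih =>
    match l, ih with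
    | [], _ =>
      constructor <;> (intro h; exact absurd h (not_hasPeak_short (by simp)))
    | [b], _ =>
      constructor <;> (intro h; exact absurd h (not_hasPeak_short (by simp)))
    | b::c::l, ih =>
      simp only [List.map_cons] at ih ⊢
      rw [hasPeak_cons₃, hasPeak_cons₃, ih]
      constructor <;> rintro (h | h)
      · left; omega
      · right; exact h
      · left; omega
      · right; exact h

lemma pair_peak (b : Bool) (B : List ℕ) (hB : ∀ x ∈ B, 2 ≤ x) :
    HasPeak (pairL b ++ B.map (·+1)) ↔ HasPeak (1::B) := by
  match B with
  | [] =>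
    constructor <;> (intro h; refine absurd h (not_hasPeak_short ?_)) <;>
      cases b <;> simp
  | [d] =>
    have hd : 2 ≤ d := hB d (by simp)
    constructor <;> intro hp
    · exfalso
      cases b <;> simp only [pairL_true, pairL_false, List.map_cons, List.map_nil,
          List.cons_append, List.nil_append] at hp <;>
        rw [hasPeak_cons₃] at hp <;>
        rcases hp with hp | hp <;>
        first | omega | exact not_hasPeak_short (by simp) hp
    · exact absurd hp (not_hasPeak_short (by simp))
  | d::e::B' =>
    have hd : 2 ≤ d := hB d (by simp)
    have he : 2 ≤ e := hB e (by simp)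
    have hs := succ_peak (d::e::B')
    simp only [List.map_cons] at hs
    cases b <;> simp only [pairL_true, pairL_false, List.map_cons,
        List.cons_append, List.nil_append] <;>
      rw [hasPeak_cons₃, hasPeak_cons₃, hasPeak_cons₃ 1 d e, hs] <;>
      (constructor
       · rintro (hp | hp | hp)
         · exact absurd hp (by omega)
         · left; omega
         · right; exact hp
       · rintro (hp | hp)
         · right; left; omega
         · right; right; exact hp)

lemma cons_big_peak {a : ℕ} (ha : 2 ≤ a) (c₁ c₂ : ℕ) (hc : c₁ ≤ 2) (L : List ℕ) :
    HasPeak (a::c₁::c₂::L) ↔ HasPeak (c₁::c₂::L) := by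
  rw [hasPeak_cons₃]
  constructor
  · rintro (h | h); · omega
    · exact h
  · intro h; right; exact h

lemma middle_peak (b : Bool) (A B : List ℕ) (hA : ∀ x ∈ A, 2 ≤ x) (hB : ∀ x ∈ B, 2 ≤ x) :
    HasPeak (A.map (·+1) ++ (pairL b ++ B.map (·+1))) ↔ HasPeak (A ++ 1::B) := by
  induction A with
  | nil => simpa using pair_peak b B hB
  | cons a A ih =>
    have ha : 2 ≤ a := hA a (by simp)
    have hA' : ∀ x ∈ A, 2 ≤ x := fun x hx => hA x (by simp [hx])
    specialize ih hA'
    match A with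
    | [] =>
      simp only [List.map_cons, List.map_nil, List.cons_append, List.nil_append] at ih ⊢
      have h1 : HasPeak ((a+1) :: (pairL b ++ B.map (·+1))) ↔ HasPeak (pairL b ++ B.map (·+1)) := by
        cases b <;> simp only [pairL_true, pairL_false, List.cons_append, List.nil_append] <;>
          exact cons_big_peak (by omega) _ _ (by omega) _
      rw [h1, pair_peak b B hB]
      match B with
      | [] =>
        constructor <;> (intro hp; exact absurd hp (not_hasPeak_short (by simp)))
      | d::B' =>
        rw [hasPeak_cons₃]
        constructor
        · intro hp; right; exact hp
        · rintro (hp | hp); · omega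
          · exact hp
    | a'::A' =>
      have ha' : 2 ≤ a' := hA' a' (by simp)
      match A' with
      | [] =>
        simp only [List.map_cons, List.map_nil, List.cons_append, List.nil_append] at ih ⊢
        cases b <;>
          simp only [pairL_true, pairL_false, List.cons_append, List.nil_append] at ih ⊢ <;>
          rw [hasPeak_cons₃, hasPeak_cons₃ a a' 1, ih] <;>
          (constructor <;> rintro (hp | hp)) <;>
          first | (left; omega) | (right; exact hp)
      | a''::A'' =>
        have ha'' : 2 ≤ a'' := hA' a'' (by simp)
        simp only [List.map_cons, List.cons_append] at ih ⊢
        rw [hasPeak_cons₃, hasPeak_cons₃ a a' a'', ih]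
        constructor <;> rintro (hp | hp) <;>
          first | (left; omega) | (right; exact hp)

lemma count_decomp {A B : List ℕ} (hc : (A ++ 1 :: B).count 1 ≤ 1) : 1 ∉ A ∧ 1 ∉ B := by
  rw [List.count_append, List.count_cons_self] at hc
  refine ⟨fun hm => ?_, fun hm => ?_⟩ <;>
    · have := List.count_pos_iff.mpr hm
      omega

lemma peak_Tb (b : Bool) {l : List ℕ} (h1 : ∀ x ∈ l, 1 ≤ x) (hc : l.count 1 ≤ 1) :
    HasPeak (Tb b l) ↔ HasPeak l := by
  by_cases hm : 1 ∈ l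
  · obtain ⟨A, B, rfl⟩ := List.append_of_mem hm
    obtain ⟨hA1, hB1⟩ := count_decomp hc
    have hA : ∀ x ∈ A, 2 ≤ x := fun x hx => by
      have h1x := h1 x (by simp [hx])
      by_contra hlt
      have hx1 : x = 1 := by omega
      exact hA1 (hx1 ▸ hx)
    have hB : ∀ x ∈ B, 2 ≤ x := fun x hx => by
      have h1x := h1 x (by simp [hx])
      by_contra hlt
      have hx1 : x = 1 := by omega
      exact hB1 (hx1 ▸ hx)
    have : Tb b (A ++ 1 :: B) = A.map (·+1) ++ (pairL b ++ B.map (·+1)) := by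
      rw [Tb_append, Tb_eq_map hA1, Tb_cons, Tb_eq_map hB1]
      simp
    rw [this, middle_peak b A B hA hB]
  · rw [Tb_eq_map hm, succ_peak]
lemma aux_nil (stk out : List ℕ) : sc231Aux [] stk out = out ++ stk := by
  rw [sc231Aux]

lemma aux_push0 (x : ℕ) (rest out : List ℕ) :
    sc231Aux (x::rest) [] out = sc231Aux rest [x] out := by
  rw [sc231Aux]
  simp

lemma aux_push1 (x y : ℕ) (rest out : List ℕ) :
    sc231Aux (x::rest) [y] out = sc231Aux rest [x,y] out := by
  rw [sc231Aux]
  simp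

lemma aux_pop {x y z : ℕ} (h : z < x ∧ x < y) (rest s out : List ℕ) :
    sc231Aux (x::rest) (y::z::s) out = sc231Aux (x::rest) (z::s) (out ++ [y]) := by
  rw [sc231Aux, if_pos h]

lemma aux_push2 {x y z : ℕ} (h : ¬(z < x ∧ x < y)) (rest s out : List ℕ) :
    sc231Aux (x::rest) (y::z::s) out = sc231Aux rest (x::y::z::s) out := by
  rw [sc231Aux, if_neg h]

lemma stk_sim (b : Bool) : ∀ inp stk out : List ℕ, (∀ a ∈ inp, 2 ≤ a) → (∀ a ∈ stk, 1 ≤ a) →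
    sc231Aux (inp.map (·+1)) (Tb b stk) (Tb b out) = Tb b (sc231Aux inp stk out) := by
  intro inp stk out
  induction inp, stk, out using sc231Aux.induct
  next stack out =>
    intro _ _
    simp [aux_nil, Tb_append]
  next x rest y z s out hcond ih =>
    -- pop case : z < x ∧ x < y
    intro hi hs
    have hx : 2 ≤ x := hi x (by simp)
    have hy : 2 ≤ y := by omega
    have hz : 1 ≤ z := hs z (by simp)
    have hs' : ∀ a ∈ z::s, 1 ≤ a := fun a ha => hs a (by simp [List.mem_cons] at ha ⊢; tauto)
    have ihs := ih hi hs'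
    rw [aux_pop hcond]
    by_cases hz1 : z = 1
    · subst hz1
      cases b <;>
        (simp [Tb_append, show ¬ y = 1 by omega] at ihs ⊢) <;>
        rw [aux_pop] <;>
        first | (exact ihs) | omega | (constructor <;> omega)
    · cases b <;>
        (simp [Tb_append, hz1, show ¬ y = 1 by omega] at ihs ⊢) <;>
        rw [aux_pop] <;>
        first | (exact ihs) | omega | (constructor <;> omega)
  next x rest y z s out hcond ih =>
    -- push case on big stack
    intro hi hs
    have hx : 2 ≤ x := hi x (by simp)
    have hy : 1 ≤ y := hs y (by simp)
    have hz : 1 ≤ z := hs z (by simp)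
    have hi' : ∀ a ∈ rest, 2 ≤ a := fun a ha => hi a (by simp [ha])
    have hs' : ∀ a ∈ x::y::z::s, 1 ≤ a := fun a ha => by
      simp [List.mem_cons] at ha
      rcases ha with rfl | rfl | rfl | ha
      · omega
      · omega
      · omega
      · exact hs a (by simp [ha])
    have ihs := ih hi' hs'
    rw [aux_push2 hcond]
    by_cases hy1 : y = 1
    · subst hy1
      cases b <;>
        (simp [Tb_append, show ¬ x = 1 by omega] at ihs ⊢) <;>
        rw [aux_push2] <;>
        first | (exact ihs) | (rintro ⟨h1, h2⟩; omega)
    · by_cases hz1 : z = 1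
      · subst hz1
        have hcond' : ¬ x < y := fun h => hcond ⟨by omega, h⟩
        cases b <;>
          (simp [Tb_append, hy1, show ¬ x = 1 by omega] at ihs ⊢) <;>
          rw [aux_push2] <;>
          first | (exact ihs) | (rintro ⟨h1, h2⟩; omega)
      · cases b <;>
          (simp [Tb_append, hy1, hz1, show ¬ x = 1 by omega] at ihs ⊢) <;>
          rw [aux_push2] <;>
          first | (exact ihs) | (rintro ⟨h1, h2⟩; omega)
  next x rest stack out hne ih =>
    -- small stack push
    intro hi hs
    have hx : 2 ≤ x := hi x (by simp)
    have hi' : ∀ a ∈ rest, 2 ≤ a := fun a ha => hi a (by simp [ha])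
    match stack, hne with
    | [], _ =>
      have hs' : ∀ a ∈ [x], 1 ≤ a := by simp; omega
      have ihs := ih hi' hs'
      rw [aux_push0]
      simp [show ¬ x = 1 by omega] at ihs ⊢
      rw [aux_push0]
      exact ihs
    | [y], _ =>
      have hy : 1 ≤ y := hs y (by simp)
      have hs' : ∀ a ∈ [x,y], 1 ≤ a := by
        intro a ha; simp at ha; rcases ha with rfl | rfl
        · omega
        · omega
      have ihs := ih hi' hs'
      rw [aux_push1]
      by_cases hy1 : y = 1
      · subst hy1
        cases b <;>
          (simp [show ¬ x = 1 by omega] at ihs ⊢) <;>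
          rw [aux_push2] <;>
          first | (exact ihs) | (rintro ⟨h1, h2⟩; omega)
      · cases b <;>
          (simp [hy1, show ¬ x = 1 by omega] at ihs ⊢) <;>
          rw [aux_push1] <;>
          exact ihs
    | y::z::s, hne => exact absurd rfl (hne y z s)

lemma inp_sim (b : Bool) : ∀ inp stk out : List ℕ,
    (∀ a ∈ inp, 1 ≤ a) → inp.count 1 ≤ 1 → (∀ a ∈ stk, 2 ≤ a) → (∀ a ∈ out, 2 ≤ a) →
    sc231Aux (Tb b inp) (stk.map (·+1)) (out.map (·+1)) = Tb (!b) (sc231Aux inp stk out) := by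
  intro inp stk out
  induction inp, stk, out using sc231Aux.induct
  next stack out =>
    intro _ _ hs ho
    have h1 : 1 ∉ out ++ stack := by
      intro hm
      rcases List.mem_append.mp hm with h | h
      · exact absurd (ho 1 h) (by omega)
      · exact absurd (hs 1 h) (by omega)
    rw [aux_nil, Tb_eq_map h1]
    simp [aux_nil]
  next x rest y z s out hcond ih =>
    -- pop case : z < x ∧ x < y,  z ≥ 2 so x ≥ 3
    intro hi hc hs ho
    have hy : 2 ≤ y := hs y (by simp)
    have hz : 2 ≤ z := hs z (by simp)
    have hx : 2 ≤ x := by omega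
    have hs' : ∀ a ∈ z::s, 2 ≤ a := fun a ha => hs a (by simp [List.mem_cons] at ha ⊢; tauto)
    have ho' : ∀ a ∈ out ++ [y], 2 ≤ a := fun a ha => by
      rcases List.mem_append.mp ha with h | h
      · exact ho a h
      · simp at h; omega
    have ihs := ih hi hc hs' ho'
    rw [aux_pop hcond]
    simp [show ¬ x = 1 by omega] at ihs ⊢
    rw [aux_pop]
    · exact ihs
    · constructor <;> omega
  next x rest y z s out hcond ih =>
    -- push case
    intro hi hc hs ho
    have hy : 2 ≤ y := hs y (by simp)
    have hz : 2 ≤ z := hs z (by simp)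
    have hx : 1 ≤ x := hi x (by simp)
    have hi' : ∀ a ∈ rest, 1 ≤ a := fun a ha => hi a (by simp [ha])
    rw [aux_push2 hcond]
    by_cases hx1 : x = 1
    · subst hx1
      rw [List.count_cons_self] at hc
      have hr1 : 1 ∉ rest := List.count_eq_zero.mp (by omega)
      have hr2 : ∀ a ∈ rest, 2 ≤ a := fun a ha => by
        have := hi' a ha
        by_contra hlt
        have ha1 : a = 1 := by omega
        exact hr1 (ha1 ▸ ha)
      have key := stk_sim (!b) rest (1::y::z::s) out hr2
        (fun a ha => by
          simp [List.mem_cons] at ha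
          rcases ha with rfl | rfl | rfl | ha
          · omega
          · omega
          · omega
          · exact le_trans (by omega) (hs a (by simp [ha])))
      have h1o : 1 ∉ out := fun hm => absurd (ho 1 hm) (by omega)
      have h1s : 1 ∉ (y::z::s) := fun hm => by
        have := (fun a ha => by
          simp [List.mem_cons] at ha
          rcases ha with rfl | rfl | ha
          · omega
          · omega
          · exact hs a (by simp [ha]) : ∀ a ∈ y::z::s, 2 ≤ a) 1 hm
        omega
      rw [Tb_eq_map h1o, show Tb (!b) (1::y::z::s) = pairL (!b) ++ (y::z::s).map (·+1) by
        rw [Tb_cons, if_pos rfl, Tb_eq_map h1s]] at key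
      cases b <;>
        simp [Tb_eq_map hr1] at key ⊢ <;>
        rw [aux_push2 (by rintro ⟨h1, h2⟩; omega), aux_push2 (by rintro ⟨h1, h2⟩; omega)] <;>
        exact key
    · rw [List.count_cons_of_ne (by omega : x ≠ (1:ℕ))] at hc
      have hx2 : 2 ≤ x := by omega
      have hs' : ∀ a ∈ x::y::z::s, 2 ≤ a := fun a ha => by
        simp [List.mem_cons] at ha
        rcases ha with rfl | rfl | rfl | ha
        · omega
        · omega
        · omega
        · exact hs a (by simp [ha])
      have ihs := ih hi' hc hs' ho
      simp [hx1] at ihs ⊢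
      rw [aux_push2]
      · exact ihs
      · rintro ⟨h1, h2⟩; omega
  next x rest stack out hne ih =>
    -- small stack
    intro hi hc hs ho
    have hx : 1 ≤ x := hi x (by simp)
    have hi' : ∀ a ∈ rest, 1 ≤ a := fun a ha => hi a (by simp [ha])
    have h1o : 1 ∉ out := fun hm => absurd (ho 1 hm) (by omega)
    match stack, hne with
    | [], _ =>
      rw [aux_push0]
      by_cases hx1 : x = 1
      · subst hx1
        rw [List.count_cons_self] at hc
        have hr1 : 1 ∉ rest := List.count_eq_zero.mp (by omega)
        have hr2 : ∀ a ∈ rest, 2 ≤ a := fun a ha => by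
          have := hi' a ha
          by_contra hlt
          have ha1 : a = 1 := by omega
          exact hr1 (ha1 ▸ ha)
        have key := stk_sim (!b) rest [1] out hr2 (by simp)
        rw [Tb_eq_map h1o, show Tb (!b) [1] = pairL (!b) by simp] at key
        cases b <;>
          simp [Tb_eq_map hr1] at key ⊢ <;>
          rw [aux_push0, aux_push1] <;>
          exact key
      · rw [List.count_cons_of_ne (by omega : x ≠ (1:ℕ))] at hc
        have hx2 : 2 ≤ x := by omega
        have ihs := ih hi' hc (by simp; omega) ho
        simp [hx1] at ihs ⊢
        rw [aux_push0]
        exact ihs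
    | [y], _ =>
      have hy : 2 ≤ y := hs y (by simp)
      rw [aux_push1]
      by_cases hx1 : x = 1
      · subst hx1
        rw [List.count_cons_self] at hc
        have hr1 : 1 ∉ rest := List.count_eq_zero.mp (by omega)
        have hr2 : ∀ a ∈ rest, 2 ≤ a := fun a ha => by
          have := hi' a ha
          by_contra hlt
          have ha1 : a = 1 := by omega
          exact hr1 (ha1 ▸ ha)
        have key := stk_sim (!b) rest [1, y] out hr2
          (by intro a ha; simp at ha; rcases ha with rfl | rfl <;> omega)
        rw [Tb_eq_map h1o, show Tb (!b) [1, y] = pairL (!b) ++ [y+1] by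
          simp [show ¬ y = 1 by omega]] at key
        cases b <;>
          simp [Tb_eq_map hr1] at key ⊢ <;>
          rw [aux_push1, aux_push2 (by rintro ⟨h1, h2⟩; omega)] <;>
          exact key
      · rw [List.count_cons_of_ne (by omega : x ≠ (1:ℕ))] at hc
        have hx2 : 2 ≤ x := by omega
        have ihs := ih hi' hc
          (by intro a ha; simp at ha; rcases ha with rfl | rfl <;> omega) ho
        simp [hx1, show ¬ y = 1 by omega] at ihs ⊢
        rw [aux_push1]
        exact ihs
    | y::z::s, hne => exact absurd rfl (hne y z s)

lemma SC231_Tb (b : Bool) {p : List ℕ} (h1 : ∀ a ∈ p, 1 ≤ a) (hc : p.count 1 ≤ 1) :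
    SC231 (Tb b p) = Tb (!b) (SC231 p) := by
  have := inp_sim b p [] [] h1 hc (by simp) (by simp)
  simpa [SC231] using this

lemma aux_perm : ∀ inp stk out : List ℕ, (sc231Aux inp stk out).Perm (out ++ stk ++ inp) := by
  intro inp stk out
  induction inp, stk, out using sc231Aux.induct
  next stack out => rw [aux_nil]; simp
  next x rest y z s out h ih =>
    rw [aux_pop h]
    refine ih.trans (List.perm_iff_count.mpr fun a => ?_)
    simp [List.count_append, List.count_cons]
    try omega
  next x rest y z s out h ih =>
    rw [aux_push2 h]
    refine ih.trans (List.perm_iff_count.mpr fun a => ?_)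
    simp [List.count_append, List.count_cons]
    try omega
  next x rest stack out hne ih =>
    match stack, hne with
    | [], _ =>
      rw [aux_push0]
      refine ih.trans (List.perm_iff_count.mpr fun a => ?_)
      simp [List.count_append, List.count_cons]
      try omega
    | [y], _ =>
      rw [aux_push1]
      refine ih.trans (List.perm_iff_count.mpr fun a => ?_)
      simp [List.count_append, List.count_cons]
      try omega
    | y::z::s, hne => exact absurd rfl (hne y z s)

lemma SC231_perm (p : List ℕ) : (SC231 p).Perm p := by
  simpa [SC231] using aux_perm p [] []

lemma iter_perm (k : ℕ) (p : List ℕ) : (SC231^[k] p).Perm p := by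
  induction k with
  | zero => simp
  | succ k ih => rw [Function.iterate_succ_apply']; exact (SC231_perm _).trans ih

lemma iter_Tb (b : Bool) (p : List ℕ) (h1 : ∀ a ∈ p, 1 ≤ a) (hc : p.count 1 ≤ 1) (k : ℕ) :
    ∃ b', SC231^[k] (Tb b p) = Tb b' (SC231^[k] p) := by
  induction k with
  | zero => exact ⟨b, rfl⟩
  | succ k ih =>
    obtain ⟨b', hb⟩ := ih
    refine ⟨!b', ?_⟩
    rw [Function.iterate_succ_apply', Function.iterate_succ_apply', hb]
    exact SC231_Tb b'
      (fun a ha => h1 a ((iter_perm k p).mem_iff.mp ha))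
      (by rw [(iter_perm k p).count_eq]; exact hc)

lemma sortNum_Tb (b : Bool) (p : List ℕ) (h1 : ∀ a ∈ p, 1 ≤ a) (hc : p.count 1 ≤ 1) :
    sortNum (Tb b p) = sortNum p := by
  unfold sortNum
  congr 1
  ext k
  simp only [Set.mem_setOf_eq]
  obtain ⟨b', hb⟩ := iter_Tb b p h1 hc k
  rw [hb, peak_Tb b'
    (fun a ha => h1 a ((iter_perm k p).mem_iff.mp ha))
    (by rw [(iter_perm k p).count_eq]; exact hc)]

lemma permOf_mem {n : ℕ} {p : List ℕ} (h : IsPermOf n p) : ∀ a ∈ p, 1 ≤ a := by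
  intro a ha
  have := h.mem_iff.mp ha
  rw [List.mem_range'_1] at this
  omega

lemma permOf_count {n : ℕ} {p : List ℕ} (h : IsPermOf n p) (hn : 1 ≤ n) : p.count 1 = 1 := by
  rw [h.count_eq]
  have h1 : 1 ∈ List.range' 1 n := by rw [List.mem_range'_1]; omega
  have hnd : (List.range' 1 n).Nodup := List.nodup_range' (s := 1) (n := n)
  have h2 := List.nodup_iff_count_le_one.mp hnd 1
  have h3 := List.count_pos_iff.mpr h1
  omega

lemma permOf_mem_one {n : ℕ} {p : List ℕ} (h : IsPermOf n p) (hn : 1 ≤ n) : 1 ∈ p :=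
  h.mem_iff.mpr (by rw [List.mem_range'_1]; omega)

lemma map_succ_range' (n : ℕ) : (List.range' 1 n).map (·+1) = List.range' 2 n := by
  have := List.map_add_range' (a := 1) 1 n 1
  simpa [Nat.add_comm] using this

lemma Tb_perm_cons (b : Bool) {p : List ℕ} (hc : p.count 1 ≤ 1) (hm : 1 ∈ p) :
    (Tb b p).Perm (1 :: p.map (·+1)) := by
  obtain ⟨A, B, rfl⟩ := List.append_of_mem hm
  obtain ⟨hA1, hB1⟩ := count_decomp hc
  rw [Tb_append, Tb_eq_map hA1, Tb_cons, Tb_eq_map hB1]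
  simp only [List.map_append, List.map_cons, List.singleton_append]
  have hpair : ((if (1:ℕ) = 1 then pairL b else [1+1]) ++ B.map (·+1)).Perm
      (1 :: 2 :: B.map (·+1)) := by
    cases b
    · simp only [if_pos rfl, pairL_false, List.cons_append, List.nil_append]
      exact List.Perm.swap 1 2 _
    · simp [pairL]
  refine (List.Perm.append_left _ hpair).trans ?_
  simpa using List.perm_middle

lemma Tb_isPermOf (b : Bool) {n : ℕ} {p : List ℕ} (h : IsPermOf n p) (hn : 1 ≤ n) :
    IsPermOf (n+1) (Tb b p) := by
  have h1 := Tb_perm_cons b (le_of_eq (permOf_count h hn)) (permOf_mem_one h hn)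
  refine h1.trans ?_
  have h2 : (p.map (·+1)).Perm (List.range' 2 n) := by
    rw [← map_succ_range']
    exact h.map _
  have h3 : List.range' 1 (n+1) = 1 :: List.range' 2 n := by
    rw [List.range'_succ]
  rw [h3]
  exact h2.cons 1

def Ul (l : List ℕ) : List ℕ := (l.erase 2).map (fun v => if v = 1 then 1 else v - 1)

lemma Ul_Tb {p : List ℕ} (b : Bool) (h1 : ∀ a ∈ p, 1 ≤ a) (hc : p.count 1 ≤ 1) :
    Ul (Tb b p) = p := by
  by_cases hm : 1 ∈ p
  · obtain ⟨A, B, rfl⟩ := List.append_of_mem hm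
    obtain ⟨hA1, hB1⟩ := count_decomp hc
    have hA : ∀ x ∈ A, 2 ≤ x := fun x hx => by
      have := h1 x (by simp [hx])
      by_contra hlt
      have hx1 : x = 1 := by omega
      exact hA1 (hx1 ▸ hx)
    have hB : ∀ x ∈ B, 2 ≤ x := fun x hx => by
      have := h1 x (by simp [hx])
      by_contra hlt
      have hx1 : x = 1 := by omega
      exact hB1 (hx1 ▸ hx)
    rw [Tb_append, Tb_eq_map hA1, Tb_cons, Tb_eq_map hB1, if_pos rfl]
    have h2A : (2:ℕ) ∉ A.map (·+1) := by
      intro hm2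
      obtain ⟨a, ha, ha2⟩ := List.mem_map.mp hm2
      have := hA a ha
      omega
    have h2B : (2:ℕ) ∉ B.map (·+1) := by
      intro hm2
      obtain ⟨a, ha, ha2⟩ := List.mem_map.mp hm2
      have := hB a ha
      omega
    have herase : ((A.map (·+1) ++ (pairL b ++ B.map (·+1))).erase 2)
        = A.map (·+1) ++ 1 :: B.map (·+1) := by
      rw [List.erase_append_right _ h2A]
      congr 1
      cases b
      · simp [pairL]
      · simp only [pairL_true, List.cons_append]
        rw [List.erase_cons_tail (by simp), List.erase_cons_head]
        simp
    have hAid : (A.map (·+1)).map (fun v => if v = 1 then 1 else v - 1) = A := by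
      rw [List.map_map]
      refine (List.map_congr_left fun a ha => ?_).trans (List.map_id A)
      have := hA a ha
      simp only [Function.comp_apply]
      rw [if_neg (by omega)]
      simp only [id_eq]
      omega
    have hBid : (B.map (·+1)).map (fun v => if v = 1 then 1 else v - 1) = B := by
      rw [List.map_map]
      refine (List.map_congr_left fun a ha => ?_).trans (List.map_id B)
      have := hB a ha
      simp only [Function.comp_apply]
      rw [if_neg (by omega)]
      simp only [id_eq]
      omega
    rw [Ul, herase, List.map_append, List.map_cons, hAid, hBid]
    simp
  · have hp2 : ∀ a ∈ p, 2 ≤ a := fun a ha => by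
      have := h1 a ha
      by_contra hlt
      have : a = 1 := by omega
      exact hm (this ▸ ha)
    rw [Tb_eq_map hm]
    have h2 : (2:ℕ) ∉ p.map (·+1) := by
      intro hm2
      obtain ⟨a, ha, ha2⟩ := List.mem_map.mp hm2
      have := hp2 a ha
      omega
    rw [Ul, List.erase_of_not_mem h2, List.map_map]
    refine (List.map_congr_left fun a ha => ?_).trans (List.map_id p)
    have := hp2 a ha
    simp only [Function.comp_apply]
    rw [if_neg (by omega)]
    simp only [id_eq]
    omega

lemma Tb_ne {p : List ℕ} (hm : 1 ∈ p) (hc : p.count 1 ≤ 1) : Tb true p ≠ Tb false p := by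
  obtain ⟨A, B, rfl⟩ := List.append_of_mem hm
  obtain ⟨hA1, hB1⟩ := count_decomp hc
  intro h
  rw [Tb_append, Tb_eq_map hA1, Tb_cons, Tb_eq_map hB1,
    Tb_append, Tb_eq_map hA1, Tb_cons, Tb_eq_map hB1] at h
  have := List.append_cancel_left h
  simp [pairL] at this

lemma finite_S (n k : ℕ) : {p : List ℕ | IsPermOf n p ∧ sortNum p = k}.Finite := by
  refine Set.Finite.subset (List.permutations (List.range' 1 n)).toFinset.finite_toSet ?_
  intro p hp
  rw [Finset.mem_coe, List.mem_toFinset, List.mem_permutations]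
  exact hp.1


/-- Writing `q(n,k)` for the number of permutations of `{1,…,n}` with sort-number exactly
`k` under `SC_231`, we have `q(n+1, k) ≥ 2 · q(n, k)`. -/
theorem q_succ_ge_two_mul (n k : ℕ) (hn : 1 ≤ n) :
    2 * {p : List ℕ | IsPermOf n p ∧ sortNum p = k}.ncard ≤
      {p : List ℕ | IsPermOf (n + 1) p ∧ sortNum p = k}.ncard := by
  set S := {p : List ℕ | IsPermOf n p ∧ sortNum p = k} with hSdef
  set S' := {p : List ℕ | IsPermOf (n + 1) p ∧ sortNum p = k} with hS'def
  have hfin : S.Finite := finite_S n k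
  have hfin' : S'.Finite := finite_S (n+1) k
  have hmem : ∀ p ∈ S, (∀ a ∈ p, 1 ≤ a) ∧ p.count 1 ≤ 1 ∧ 1 ∈ p := by
    intro p hp
    obtain ⟨h1, _⟩ := hp
    exact ⟨permOf_mem h1, le_of_eq (permOf_count h1 hn), permOf_mem_one h1 hn⟩
  have hmaps : ∀ b : Bool, ∀ p ∈ S, Tb b p ∈ S' := by
    intro b p hp
    obtain ⟨h1, h2⟩ := hp
    refine ⟨Tb_isPermOf b h1 hn, ?_⟩
    rw [sortNum_Tb b p (permOf_mem h1) (le_of_eq (permOf_count h1 hn))]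
    exact h2
  have hinj : ∀ b : Bool, Set.InjOn (Tb b) S := by
    intro b p hp q hq h
    obtain ⟨hp1, hp2, _⟩ := hmem p hp
    obtain ⟨hq1, hq2, _⟩ := hmem q hq
    rw [← Ul_Tb b hp1 hp2, h, Ul_Tb b hq1 hq2]
  have hsub : (Tb true '' S) ∪ (Tb false '' S) ⊆ S' := by
    rintro x (⟨p, hp, rfl⟩ | ⟨p, hp, rfl⟩)
    · exact hmaps true p hp
    · exact hmaps false p hp
  have hdisj : Disjoint (Tb true '' S) (Tb false '' S) := by
    rw [Set.disjoint_left]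
    rintro x ⟨p, hp, rfl⟩ ⟨q, hq, hxq⟩
    obtain ⟨hp1, hp2, hp3⟩ := hmem p hp
    obtain ⟨hq1, hq2, _⟩ := hmem q hq
    have hpq : q = p := by
      rw [← Ul_Tb false hq1 hq2, hxq, Ul_Tb true hp1 hp2]
    rw [hpq] at hxq
    exact Tb_ne hp3 hp2 hxq.symm
  calc 2 * S.ncard = (Tb true '' S).ncard + (Tb false '' S).ncard := by
        rw [Set.ncard_image_of_injOn (hinj true), Set.ncard_image_of_injOn (hinj false)]
        ring
    _ = ((Tb true '' S) ∪ (Tb false '' S)).ncard :=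
        (Set.ncard_union_eq hdisj (hfin.image _) (hfin.image _)).symm
    _ ≤ S'.ncard := Set.ncard_le_ncard hsub hfin'
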